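/- If every regressive coloring of exactly large sets admits, within every infinite set, an infinite min-homogeneous subset, then every 2-coloring of exactly large sets admits, within every infinite set, an infinite homogeneous subset. (KM(!ω) implies RT(!ω).) -/

import Mathlib

/-- A finite set `S ⊆ ℕ` is exactly large if `|S| = min S + 1`. -/
def ExactlyLarge (S : Finset ℕ) : Prop :=
  ∃ h : S.Nonempty, S.card = S.min' h + 1

/-- `L` is homogeneous for a coloring `C` of exactly large sets: `C` is constant
on all exactly large subsets of `L`. -/
def HomogFor {β : Type*} (C : Finset ℕ → β) (L : Set ℕ) : Prop :=
  ∃ c : β, ∀ S : Finset ℕ, ↑S ⊆ L → ExactlyLarge S → C S = c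

/-- `H` is min-homogeneous for `C`: on exactly large subsets of `H`, the value
of `C` depends only on the minimum. -/
def MinHomogFor {β : Type*} (C : Finset ℕ → β) (H : Set ℕ) : Prop :=
  ∀ S S' : Finset ℕ, ↑S ⊆ H → ↑S' ⊆ H → ExactlyLarge S → ExactlyLarge S' →
    S.min = S'.min → C S = C S'

/-- A coloring of exactly large sets is regressive if `C S < min S` whenever `min S > 0`. -/
def RegressiveEL (C : Finset ℕ → ℕ) : Prop :=
  ∀ S : Finset ℕ, ExactlyLarge S → ∀ h : S.Nonempty, 0 < S.min' h → C S < S.min' h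

/-- KM(!ω) implies RT(!ω). -/
theorem km_implies_rt
    (hKM : ∀ C : Finset ℕ → ℕ, RegressiveEL C → ∀ M : Set ℕ, M.Infinite →
      ∃ H ⊆ M, H.Infinite ∧ MinHomogFor C H) :
    ∀ C : Finset ℕ → Fin 2, ∀ M : Set ℕ, M.Infinite →
      ∃ L ⊆ M, L.Infinite ∧ HomogFor C L := by
  classical
  intro C M hM
  set D : Finset ℕ → ℕ := fun S =>
    if h : S.Nonempty then (if 2 ≤ S.min' h then (C S).val else 0) else 0 with hD
  have hreg : RegressiveEL D := by
    intro S _ h hpos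
    simp only [hD, dif_pos h]
    split
    · exact lt_of_lt_of_le (C S).is_lt ‹2 ≤ _›
    · exact hpos
  obtain ⟨H, hHM, hHinf, hmh⟩ := hKM D hreg M hM
  set H' : Set ℕ := H \ Set.Iic 1 with hH'
  have hH'H : H' ⊆ H := Set.diff_subset
  have hH'inf : H'.Infinite := hHinf.diff (Set.finite_Iic 1)
  have hH'gt : ∀ m ∈ H', 1 < m := by
    intro m hm
    simpa using hm.2
  -- for each m in H', there is an exactly large subset of H' with min m
  have key : ∀ m ∈ H', ∃ S : Finset ℕ, ↑S ⊆ H' ∧ ExactlyLarge S ∧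
      S.min = (m : WithBot ℕ) := by
    intro m hm
    have hinf2 : (H' ∩ Set.Ioi m).Infinite := by
      have : (H' ∩ Set.Ioi m) = H' \ Set.Iic m := by
        ext x; simp [Set.mem_diff]
      rw [this]
      exact hH'inf.diff (Set.finite_Iic m)
    obtain ⟨t, htsub, htcard⟩ := hinf2.exists_subset_card_eq m
    have hmt : m ∉ t := by
      intro hmem
      exact lt_irrefl m (htsub hmem).2
    refine ⟨insert m t, ?_, ?_, ?_⟩
    · intro x hx
      simp only [Finset.coe_insert, Set.mem_insert_iff] at hx
      rcases hx with rfl | hx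
      · exact hm
      · exact (htsub hx).1
    · have hne : (insert m t).Nonempty := ⟨m, Finset.mem_insert_self m t⟩
      refine ⟨hne, ?_⟩
      have hmin : (insert m t).min' hne = m := by
        apply le_antisymm
        · exact Finset.min'_le _ _ (Finset.mem_insert_self m t)
        · apply Finset.le_min'
          intro y hy
          rcases Finset.mem_insert.1 hy with rfl | hy
          · exact le_rfl
          · exact le_of_lt (htsub hy).2
      rw [hmin, Finset.card_insert_of_notMem hmt, htcard]
    · have hne : (insert m t).Nonempty := ⟨m, Finset.mem_insert_self m t⟩
      rw [← Finset.coe_min' hne]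
      congr 1
      apply le_antisymm
      · exact Finset.min'_le _ _ (Finset.mem_insert_self m t)
      · apply Finset.le_min'
        intro y hy
        rcases Finset.mem_insert.1 hy with rfl | hy
        · exact le_rfl
        · exact le_of_lt (htsub hy).2
  -- the induced color of each m ∈ H'
  set f : ℕ → Fin 2 := fun m =>
    if hm : m ∈ H' then C (key m hm).choose else 0 with hf
  -- every exactly large subset S of H' has C S = f (min S)
  have main : ∀ S : Finset ℕ, ↑S ⊆ H' → ExactlyLarge S →
      ∀ h : S.Nonempty, C S = f (S.min' h) := by
    intro S hSsub hSel h
    have hmem : S.min' h ∈ H' := hSsub (Finset.min'_mem S h)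
    obtain ⟨hTsub, hTel, hTmin⟩ := (key (S.min' h) hmem).choose_spec
    set T := (key (S.min' h) hmem).choose
    have hDge : ∀ (U : Finset ℕ), ↑U ⊆ H' → ∀ hU : U.Nonempty, D U = (C U).val := by
      intro U hUsub hU
      have : 2 ≤ U.min' hU := hH'gt _ (hUsub (Finset.min'_mem U hU))
      simp only [hD]
      rw [dif_pos hU, if_pos this]
    have hmineq : S.min = T.min := by
      rw [hTmin, ← Finset.coe_min' h]
      rfl
    have hDeq : D S = D T := hmh S T (hSsub.trans hH'H) (hTsub.trans hH'H) hSel hTel hmineq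
    have hTne : T.Nonempty := hTel.1
    rw [hDge S hSsub h, hDge T hTsub hTne] at hDeq
    have : C S = C T := Fin.val_injective hDeq
    rw [this]
    show C T = f (S.min' h)
    simp only [hf]
    rw [dif_pos hmem]
  -- pigeonhole
  have hpig : ∃ c : Fin 2, {m | m ∈ H' ∧ f m = c}.Infinite := by
    by_contra hc
    push_neg at hc
    have hsub : H' ⊆ {m | m ∈ H' ∧ f m = 0} ∪ {m | m ∈ H' ∧ f m = 1} := by
      intro m hm
      have : f m = 0 ∨ f m = 1 := by omega
      rcases this with h0 | h1
      · exact Or.inl ⟨hm, h0⟩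
      · exact Or.inr ⟨hm, h1⟩
    exact hH'inf (((hc 0).union (hc 1)).subset hsub)
  obtain ⟨c, hcinf⟩ := hpig
  refine ⟨{m | m ∈ H' ∧ f m = c}, ?_, hcinf, c, ?_⟩
  · intro m hm
    exact hHM (hH'H hm.1)
  · intro S hSsub hSel
    have hSsub' : ↑S ⊆ H' := fun x hx => (hSsub hx).1
    have h := hSel.1
    rw [main S hSsub' hSel h]
    exact (hSsub (Finset.min'_mem S h)).2
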